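/- For μ_t ∈ [0, √2 - 1], 0 < r < 1, and K_r ≥ 2: (K_r/2)·[(1-μ_t)^2/r + 1] + μ_t·(1-μ_t) ≤ 2·[ (K_r/(2r))·(1-2μ_t) + K_r/2 + μ_t ]. -/

import Mathlib

theorem serial_gap_low_r (μt r : ℝ) (hμt : μt ∈ Set.Icc (0:ℝ) (Real.sqrt 2 - 1))
    (hr : r ∈ Set.Ioo (0:ℝ) 1) (Kr : ℕ) (hKr : 2 ≤ Kr) :
    ((Kr : ℝ) / 2) * ((1 - μt) ^ 2 / r + 1) + μt * (1 - μt)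
      ≤ 2 * ((Kr : ℝ) / (2 * r) * (1 - 2 * μt) + (Kr : ℝ) / 2 + μt) := by
  obtain ⟨hμ0, hμ1⟩ := hμt
  obtain ⟨hr0, hr1⟩ := hr
  have hKr' : (2:ℝ) ≤ (Kr : ℝ) := by exact_mod_cast hKr
  have h2 : Real.sqrt 2 ^ 2 = 2 := Real.sq_sqrt (by norm_num)
  have hs : (μt + 1) ^ 2 ≤ 2 := by nlinarith [Real.sqrt_nonneg 2]
  have hrne : r ≠ 0 := ne_of_gt hr0
  rw [← mul_le_mul_iff_right₀ hr0]
  have e1 : r * (((Kr : ℝ) / 2) * ((1 - μt) ^ 2 / r + 1) + μt * (1 - μt))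
      = ((Kr : ℝ) / 2) * (1 - μt) ^ 2 + r * ((Kr : ℝ) / 2 + μt * (1 - μt)) := by
    field_simp; ring
  have e2 : r * (2 * ((Kr : ℝ) / (2 * r) * (1 - 2 * μt) + (Kr : ℝ) / 2 + μt))
      = (Kr : ℝ) * (1 - 2 * μt) + r * ((Kr : ℝ) + 2 * μt) := by
    field_simp; ring
  rw [e1, e2]
  nlinarith [mul_nonneg (mul_nonneg hr0.le hμ0) hμ0, mul_nonneg hr0.le hμ0,
    mul_nonneg (sub_nonneg.2 hKr') (sub_nonneg.2 hs)]
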